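/- Let ε, δ > 0, λ ∈ ℝ, λ ≠ 0, and α, β, ρ, σ : ℤ → ℝ. Define a_n = ε Σ_k^n α_k, b_n = ε Σ_k^n β_k, c_n = ε Σ_k^n a_k β_k, r_m = δ Σ_k^m ρ_k, s_m = δ Σ_k^m σ_k, t_m = δ Σ_k^m r_k σ_k (bidirectional sums), and define f^m_n ∈ ℝ³ by f^m_n = ( a_n λ + (r_m s_m − t_m)λ⁻², (a_n b_n − c_n)λ² + r_m λ⁻¹, a_n r_m − (a_n b_n − c_n)(r_m s_m − t_m) + λ³ ε Σ_k^n α_k c_{k−1} + λ⁻³ δ Σ_k^m ρ_k t_{k−1} ). Then for all (n, m) ∈ ℤ²: f^m_{n+1} − f^m_n = ε α_{n+1} · ( λ, b_n λ², r_m − b_n(r_m s_m − t_m) + c_n λ³ ) and f^{m+1}_n − f^m_n = δ ρ_{m+1} · ( s_m λ⁻², λ⁻¹, a_n − s_m(a_n b_n − c_n) + t_m λ⁻³ ). -/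

import Mathlib

/-- Bidirectional sum: `Σ_k^n x_k = Σ_{k=1}^n x_k` for `n ≥ 1`, `0` for `n = 0`, and
`−Σ_{k=n+1}^0 x_k` for `n ≤ −1`. -/
noncomputable def bsum (x : ℤ → ℝ) (n : ℤ) : ℝ :=
  if 1 ≤ n then ∑ k ∈ Finset.Icc (1:ℤ) n, x k
  else if n = 0 then 0
  else -∑ k ∈ Finset.Icc (n+1) (0:ℤ), x k

lemma bsum_step (x : ℤ → ℝ) (n : ℤ) : bsum x (n+1) = bsum x n + x (n+1) := by
  unfold bsum
  rcases lt_trichotomy n 0 with h | h | h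
  · rcases eq_or_lt_of_le (by omega : n + 1 ≤ 0) with h0 | h0
    · rw [if_neg (by omega), if_pos h0, if_neg (by omega), if_neg (by omega),
        show Finset.Icc (n+1) (0:ℤ) = {0} by ext k; simp [Finset.mem_Icc]; omega]
      simp [h0]
    · rw [if_neg (by omega), if_neg (by omega), if_neg (by omega), if_neg (by omega),
        show Finset.Icc (n+1) (0:ℤ) = insert (n+1) (Finset.Icc (n+1+1) 0) by
          ext k; simp [Finset.mem_Icc]; omega,
        Finset.sum_insert (by simp [Finset.mem_Icc])]
      ring
  · subst h; simp
  · rw [if_pos (by omega : (1:ℤ) ≤ n + 1), if_pos (show (1:ℤ) ≤ n by omega),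
      show Finset.Icc (1:ℤ) (n+1) = insert (n+1) (Finset.Icc 1 n) by
        ext k; simp [Finset.mem_Icc]; omega,
      Finset.sum_insert (by simp [Finset.mem_Icc])]
    ring

/-- The representation formula `f^m_n` for the associated family of discrete indefinite
improper affine spheres: its forward differences are the stated columns of the discrete
moving frame (times `ε`, `δ`).  Here `f n m` denotes `f^m_n`. -/
theorem stmt12 (ε δ : ℝ) (hε : 0 < ε) (hδ : 0 < δ) (lam : ℝ) (hlam : lam ≠ 0)
    (α β ρ σ : ℤ → ℝ)
    (a b c r s t : ℤ → ℝ)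
    (ha : ∀ n, a n = ε * bsum α n)
    (hb : ∀ n, b n = ε * bsum β n)
    (hc : ∀ n, c n = ε * bsum (fun k => a k * β k) n)
    (hr : ∀ m, r m = δ * bsum ρ m)
    (hs : ∀ m, s m = δ * bsum σ m)
    (ht : ∀ m, t m = δ * bsum (fun k => r k * σ k) m)
    (f : ℤ → ℤ → (Fin 3 → ℝ))
    (hf : ∀ n m, f n m =
      ![a n * lam + (r m * s m - t m) * lam⁻¹ ^ 2,
        (a n * b n - c n) * lam ^ 2 + r m * lam⁻¹,
        a n * r m - (a n * b n - c n) * (r m * s m - t m)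
          + lam ^ 3 * ε * bsum (fun k => α k * c (k-1)) n
          + lam⁻¹ ^ 3 * δ * bsum (fun k => ρ k * t (k-1)) m]) :
    ∀ n m : ℤ,
      f (n+1) m - f n m = (ε * α (n+1)) •
        ![lam, b n * lam ^ 2, r m - b n * (r m * s m - t m) + c n * lam ^ 3] ∧
      f n (m+1) - f n m = (δ * ρ (m+1)) •
        ![s m * lam⁻¹ ^ 2, lam⁻¹, a n - s m * (a n * b n - c n) + t m * lam⁻¹ ^ 3] := by
  intro n m
  have hA : a (n+1) = a n + ε * α (n+1) := by rw [ha, ha, bsum_step]; ring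
  have hB : b (n+1) = b n + ε * β (n+1) := by rw [hb, hb, bsum_step]; ring
  have hC : c (n+1) = c n + ε * (a (n+1) * β (n+1)) := by rw [hc, hc, bsum_step]; ring
  have hR : r (m+1) = r m + δ * ρ (m+1) := by rw [hr, hr, bsum_step]; ring
  have hS : s (m+1) = s m + δ * σ (m+1) := by rw [hs, hs, bsum_step]; ring
  have hT : t (m+1) = t m + δ * (r (m+1) * σ (m+1)) := by rw [ht, ht, bsum_step]; ring
  have hX : bsum (fun k => α k * c (k-1)) (n+1)
      = bsum (fun k => α k * c (k-1)) n + α (n+1) * c n := by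
    rw [bsum_step]; norm_num
  have hY : bsum (fun k => ρ k * t (k-1)) (m+1)
      = bsum (fun k => ρ k * t (k-1)) m + ρ (m+1) * t m := by
    rw [bsum_step]; norm_num
  constructor <;> (funext i; fin_cases i) <;>
    simp only [hf, hA, hB, hC, hR, hS, hT, hX, hY, Pi.sub_apply, Pi.smul_apply,
      Fin.zero_eta, Fin.mk_one, Fin.reduceFinMk,
      Matrix.cons_val_zero, Matrix.cons_val_one, Matrix.head_cons, Matrix.cons_val_two,
      Matrix.tail_cons, smul_eq_mul] <;> ring
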